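/- Let n ∈ ℕ, let a = (a_1, ..., a_n) : I → ℝ^n be continuously differentiable, and let f : I → ℝ^n be a fundamental system of solutions of y^{(n)} = a_1 y^{(n-1)} + ... + a_n y. Then for every j ∈ {0, ..., n−1}, one has on I: W_f^{(n+1, n−1, ..., j+1, j−1, ..., 1, 0)} = (−1)^{n−j−1} · W_f · (a_1 a_{n−j} + a_{n−j+1} + a_{n−j}'), where a_{n+1} := 0 and the multi-index consists of n+1 followed by the integers n−1 down to 0 with j omitted. -/

import Mathlib

open Matrix

/-- Noncommutative complete Bell polynomials: `B_0 = I_n`,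
`B_{m+1}(X_1,…,X_{m+1}) = ∑_{j=0}^m C(m,j) B_j(X_1,…,X_j) X_{m+1-j}`.
Here `X : Fin m → _` with `X i` playing the role of `X_{i+1}`. -/
noncomputable def Bell {n : ℕ} :
    (m : ℕ) → (Fin m → Matrix (Fin n) (Fin n) ℝ) → Matrix (Fin n) (Fin n) ℝ
  | 0, _ => 1
  | m + 1, X => ∑ j : Fin (m + 1),
      (Nat.choose m (j : ℕ) : ℝ) •
        (Bell (j : ℕ) (fun i : Fin (j : ℕ) => X (Fin.castLE (by omega) i)) *
          X ⟨m - (j : ℕ), by omega⟩)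

/-- Entrywise `k`-th derivative (within `I`) of a matrix-valued function. -/
noncomputable def matD {n : ℕ} (I : Set ℝ) (X : ℝ → Matrix (Fin n) (Fin n) ℝ) (k : ℕ)
    (x : ℝ) : Matrix (Fin n) (Fin n) ℝ :=
  Matrix.of fun p q => iteratedDerivWithin k (fun t => X t p q) I x

/-- `B_j(X, X', …, X^{(j-1)})` evaluated at `x` (derivatives within `I`). -/
noncomputable def BellD {n : ℕ} (I : Set ℝ) (X : ℝ → Matrix (Fin n) (Fin n) ℝ) (j : ℕ)
    (x : ℝ) : Matrix (Fin n) (Fin n) ℝ :=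
  Bell j (fun i : Fin j => matD I X (i : ℕ) x)

/-- Generalized Wronskian `W_f^k = det(f^{(k_1)} | … | f^{(k_n)})` (derivatives within `I`). -/
noncomputable def genW {n : ℕ} (I : Set ℝ) (f : ℝ → Fin n → ℝ) (k : Fin n → ℕ) (x : ℝ) : ℝ :=
  Matrix.det (Matrix.of fun p q => iteratedDerivWithin (k q) (fun t => f t p) I x)

/-- The multi-index `(n-1, n-2, …, 1, 0)` of the ordinary Wronskian. -/
def wIdx (n : ℕ) : Fin n → ℕ := fun q => n - 1 - (q : ℕ)

/-- The multi-index `(n+d, n-1, …, j+1, j-1, …, 1, 0)`. -/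
def dIdx (n d j : ℕ) : Fin n → ℕ :=
  fun q => if (q : ℕ) = 0 then n + d
    else if j < n - (q : ℕ) then n - (q : ℕ) else n - (q : ℕ) - 1

/-- `Φ_f^{[j]} = (-1)^{n-j-1} W_f^{(n,n-1,…,j+1,j-1,…,0)} / W_f`. -/
noncomputable def Phi {n : ℕ} (I : Set ℝ) (f : ℝ → Fin n → ℝ) (j : ℕ) (x : ℝ) : ℝ :=
  (-1 : ℝ) ^ (n - j - 1) * genW I f (dIdx n 0 j) x / genW I f (wIdx n) x

/-- The `1`-indexed standard basis vector `e_i` of `ℝ^n`. -/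
def stdB (n i : ℕ) : Fin n → ℝ := fun p => if (p : ℕ) + 1 = i then 1 else 0

/-- The matrix `X_a = (a | e_1 | … | e_{n-1})`. -/
def colMat {n : ℕ} (a : ℝ → Fin n → ℝ) (x : ℝ) : Matrix (Fin n) (Fin n) ℝ :=
  Matrix.of fun p q =>
    if (q : ℕ) = 0 then a x p else if (p : ℕ) + 1 = (q : ℕ) then 1 else 0

/-- The matrix `Y_f = (f^{(n-1)} | … | f' | f)` (derivatives within `I`). -/
noncomputable def Yfun {n : ℕ} (I : Set ℝ) (f : ℝ → Fin n → ℝ) (x : ℝ) :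
    Matrix (Fin n) (Fin n) ℝ :=
  Matrix.of fun p q => iteratedDerivWithin (n - 1 - (q : ℕ)) (fun t => f t p) I x

/-- The `1`-indexed component `a_i` of `a : I → ℝ^n`, with `a_i := 0` for `i > n`. -/
noncomputable def aExt {n : ℕ} (a : ℝ → Fin n → ℝ) (i : ℕ) : ℝ → ℝ :=
  fun t => if h : i - 1 < n then a t ⟨i - 1, h⟩ else 0

/-- `y` is an `n`-times differentiable (on `I`) solution of
`y^{(n)} = a_1 y^{(n-1)} + ⋯ + a_n y`, where `a i` is `a_{i+1}`. -/
def SolvesDE {n : ℕ} (I : Set ℝ) (a : ℝ → Fin n → ℝ) (y : ℝ → ℝ) : Prop :=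
  (∀ k < n, DifferentiableOn ℝ (iteratedDerivWithin k y I) I) ∧
    ∀ x ∈ I, iteratedDerivWithin n y I x =
      ∑ i : Fin n, a x i * iteratedDerivWithin (n - 1 - (i : ℕ)) y I x

/-- `f : I → ℝ^n` is a fundamental system of solutions of
`y^{(n)} = a_1 y^{(n-1)} + ⋯ + a_n y`: each component solves the equation and the
components are linearly independent functions on `I`. -/
def FundSystem {n : ℕ} (I : Set ℝ) (a : ℝ → Fin n → ℝ) (f : ℝ → Fin n → ℝ) : Prop :=
  (∀ p : Fin n, SolvesDE I a fun t => f t p) ∧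
    LinearIndependent ℝ fun p : Fin n => I.restrict fun t => f t p



/-- Determinant as a linear map in one column. -/
noncomputable def colDet {n : ℕ} (M : Matrix (Fin n) (Fin n) ℝ) (q : Fin n) :
    (Fin n → ℝ) →ₗ[ℝ] ℝ where
  toFun c := (M.updateCol q c).det
  map_add' u v := Matrix.det_updateCol_add M q u v
  map_smul' s u := by simpa using Matrix.det_updateCol_smul M q s u

private lemma myCycle_lt {n : ℕ} {i j : Fin n} (h : j < i) :
    ((Fin.cycleRange i j : Fin n) : ℕ) = (j : ℕ) + 1 := by
  cases n with
  | zero => exact j.elim0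
  | succ m => exact Fin.coe_cycleRange_of_lt h

private lemma myCycle_eq {n : ℕ} {i j : Fin n} (h : j = i) :
    ((Fin.cycleRange i j : Fin n) : ℕ) = 0 := by
  cases n with
  | zero => exact j.elim0
  | succ m => rw [Fin.cycleRange_of_eq h]; rfl

private lemma myCycle_gt {n : ℕ} {i j : Fin n} (h : i < j) :
    ((Fin.cycleRange i j : Fin n) : ℕ) = (j : ℕ) := by
  cases n with
  | zero => exact j.elim0
  | succ m => rw [Fin.cycleRange_of_gt h]

private lemma deriv_step {n : ℕ} {I : Set ℝ} (hIo : IsOpen I) {a : ℝ → Fin n → ℝ}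
    (ha : ∀ i : Fin n, ContDiffOn ℝ 1 (fun t => a t i) I) {y : ℝ → ℝ}
    (hy : SolvesDE I a y) {x : ℝ} (hx : x ∈ I) :
    iteratedDerivWithin (n + 1) y I x =
      ∑ i : Fin n, (derivWithin (fun t => a t i) I x *
          iteratedDerivWithin (n - 1 - (i : ℕ)) y I x +
        a x i * iteratedDerivWithin (n - (i : ℕ)) y I x) := by
  have hu : UniqueDiffWithinAt ℝ I x := hIo.uniqueDiffWithinAt hx
  rw [iteratedDerivWithin_succ,
    derivWithin_congr (fun t ht => hy.2 t ht) (hy.2 x hx)]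
  refine HasDerivWithinAt.derivWithin ?_ hu
  refine HasDerivWithinAt.fun_sum fun i _ => ?_
  have hai : HasDerivWithinAt (fun t => a t i) (derivWithin (fun t => a t i) I x) I x :=
    (((ha i).differentiableOn one_ne_zero) x hx).hasDerivWithinAt
  have hgi : HasDerivWithinAt (iteratedDerivWithin (n - 1 - (i : ℕ)) y I)
      (iteratedDerivWithin (n - (i : ℕ)) y I x) I x := by
    have hlt := i.isLt
    have h1 := ((hy.1 (n - 1 - (i : ℕ)) (by omega)) x hx).hasDerivWithinAt
    rwa [← iteratedDerivWithin_succ,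
      show n - 1 - (i : ℕ) + 1 = n - (i : ℕ) by omega] at h1
  exact hai.mul hgi

/-- for a fundamental system `f` with continuously differentiable `a`,
`W_f^{(n+1,n-1,…,j+1,j-1,…,0)} = (-1)^{n-j-1} W_f (a_1 a_{n-j} + a_{n-j+1} + a_{n-j}')`
on `I` for `0 ≤ j ≤ n-1`, where `a_{n+1} := 0`. -/
theorem stmt_8 (n : ℕ) (hn : 0 < n) (I : Set ℝ) (hIo : IsOpen I) (hIne : I.Nonempty)
    (hIc : I.OrdConnected) (a f : ℝ → Fin n → ℝ)
    (ha : ∀ i : Fin n, ContDiffOn ℝ 1 (fun t => a t i) I)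
    (hf : FundSystem I a f) :
    ∀ j < n, ∀ x ∈ I,
      genW I f (dIdx n 1 j) x =
        (-1 : ℝ) ^ (n - j - 1) * genW I f (wIdx n) x *
          (aExt a 1 x * aExt a (n - j) x + aExt a (n - j + 1) x +
            derivWithin (aExt a (n - j)) I x) := by
  intro j hj x hx
  set q0 : Fin n := ⟨0, hn⟩ with hq0
  have hq0v : (q0 : ℕ) = 0 := rfl
  set col : ℕ → Fin n → ℝ := fun k p => iteratedDerivWithin k (fun t => f t p) I x with hcol
  set base : Matrix (Fin n) (Fin n) ℝ :=
    Matrix.of fun p q => iteratedDerivWithin (dIdx n 1 j q) (fun t => f t p) I x with hbase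
  set D : ℕ → ℝ := fun k => (base.updateCol q0 (col k)).det with hD
  -- the goal's LHS is `D (n+1)`
  have hgen : genW I f (dIdx n 1 j) x = D (n + 1) := by
    have hcol0 : col (n + 1) = fun p => base p q0 := by funext p; rfl
    show _ = (base.updateCol q0 (col (n + 1))).det
    rw [hcol0, Matrix.updateCol_eq_self]
    rfl
  -- determinants with a repeated derivative order vanish
  have hzero : ∀ k, k < n → k ≠ j → D k = 0 := by
    intro k hk hkj
    have hq : ∃ q : Fin n, (q : ℕ) ≠ 0 ∧ dIdx n 1 j q = k := by
      by_cases hjk : j < k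
      · refine ⟨⟨n - k, by omega⟩, by simp only [Fin.val_mk]; omega, ?_⟩
        simp only [dIdx, Fin.val_mk]
        split_ifs <;> omega
      · refine ⟨⟨n - k - 1, by omega⟩, by simp only [Fin.val_mk]; omega, ?_⟩
        simp only [dIdx, Fin.val_mk]
        split_ifs <;> omega
    obtain ⟨q, hqne, hqk⟩ := hq
    have hne : q0 ≠ q := fun h => hqne (by rw [← h])
    apply Matrix.det_zero_of_column_eq hne
    intro p
    rw [Matrix.updateCol_apply, Matrix.updateCol_apply, if_pos rfl, if_neg (Ne.symm hne)]
    show col k p = col (dIdx n 1 j q) p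
    rw [hqk]
  -- the surviving determinant is a signed Wronskian
  have hDj : D j = (-1 : ℝ) ^ (n - 1 - j) * genW I f (wIdx n) x := by
    set i0 : Fin n := ⟨n - 1 - j, by omega⟩ with hi0
    have hi0v : (i0 : ℕ) = n - 1 - j := rfl
    set N := base.updateCol q0 (col j) with hN
    have hNval : ∀ (p q' : Fin n), N p q' =
        col (if (q' : ℕ) = 0 then j
          else if j < n - (q' : ℕ) then n - (q' : ℕ) else n - (q' : ℕ) - 1) p := by
      intro p q'
      by_cases h0 : q' = q0
      · subst h0
        rw [hN, Matrix.updateCol_apply, if_pos rfl, if_pos hq0v]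
      · rw [hN, Matrix.updateCol_apply, if_neg h0]
        have h0' : (q' : ℕ) ≠ 0 := fun h => h0 (Fin.ext h)
        show col (dIdx n 1 j q') p = _
        exact congrArg (fun k => col k p) (by simp only [dIdx, if_neg h0'])
    have hsub : N.submatrix id (Fin.cycleRange i0) =
        Matrix.of (fun p q => iteratedDerivWithin (wIdx n q) (fun t => f t p) I x) := by
      ext p q
      rw [Matrix.submatrix_apply, hNval]
      show col _ p = col (wIdx n q) p
      refine congrArg (fun k => col k p) ?_
      have hqlt := q.isLt
      have hjn : j < n := hj
      rcases lt_trichotomy q i0 with h | h | h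
      · rw [myCycle_lt h]
        have hqi : (q : ℕ) < n - 1 - j := h
        simp only [wIdx]
        split_ifs <;> first | omega | exact ‹False›.elim
      · rw [myCycle_eq h]
        have hqi : (q : ℕ) = n - 1 - j := by rw [h]
        simp only [wIdx]
        split_ifs <;> omega
      · rw [myCycle_gt h]
        have hqi : n - 1 - j < (q : ℕ) := h
        simp only [wIdx]
        split_ifs <;> omega
    have hperm := Matrix.det_permute' (Fin.cycleRange i0) N
    rw [hsub, Fin.sign_cycleRange] at hperm
    push_cast at hperm
    have hsq : ((-1 : ℝ)) ^ (n - 1 - j) * (-1 : ℝ) ^ (n - 1 - j) = 1 := by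
      rw [← pow_add]
      exact Even.neg_one_pow ⟨_, rfl⟩
    have hperm' : genW I f (wIdx n) x = (-1 : ℝ) ^ (n - 1 - j) * N.det := by
      rw [show genW I f (wIdx n) x =
        (Matrix.of (fun p q => iteratedDerivWithin (wIdx n q) (fun t => f t p) I x)).det
        from rfl, hperm]
    show N.det = _
    rw [hperm', ← mul_assoc, hsq, one_mul]
  -- linearity of the determinant in column `q0`
  have hL1 : ∀ (c : Fin n → ℝ) (u : Fin n → Fin n → ℝ),
      (base.updateCol q0 (fun p => ∑ i : Fin n, c i * u i p)).det =
        ∑ i : Fin n, c i * (base.updateCol q0 (u i)).det := by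
    intro c u
    have h1 : (fun p => ∑ i : Fin n, c i * u i p) =
        ∑ i : Fin n, c i • u i := by funext p; simp
    rw [h1]
    show colDet base q0 _ = _
    rw [map_sum]
    refine Finset.sum_congr rfl fun i _ => ?_
    rw [LinearMap.map_smul]
    rfl
  have hL2 : ∀ (c c' : Fin n → ℝ) (u v : Fin n → Fin n → ℝ),
      (base.updateCol q0 (fun p => ∑ i : Fin n, (c i * u i p + c' i * v i p))).det =
        ∑ i : Fin n, (c i * (base.updateCol q0 (u i)).det
          + c' i * (base.updateCol q0 (v i)).det) := by
    intro c c' u v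
    have h1 : (fun p => ∑ i : Fin n, (c i * u i p + c' i * v i p)) =
        ∑ i : Fin n, (c i • u i + c' i • v i) := by
      funext p; simp
    rw [h1]
    show colDet base q0 _ = _
    rw [map_sum]
    refine Finset.sum_congr rfl fun i _ => ?_
    rw [LinearMap.map_add, LinearMap.map_smul, LinearMap.map_smul]
    rfl
  -- `D n` via the ODE
  have hDn : D n = a x ⟨n - 1 - j, by omega⟩ * D j := by
    have hode : col n = fun p => ∑ i : Fin n, a x i * col (n - 1 - (i : ℕ)) p := by
      funext p
      exact (hf.1 p).2 x hx
    have h2 : D n = ∑ i : Fin n, a x i * D (n - 1 - (i : ℕ)) := by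
      show (base.updateCol q0 (col n)).det = _
      rw [hode]
      exact hL1 (fun i => a x i) (fun i => col (n - 1 - (i : ℕ)))
    rw [h2, Finset.sum_eq_single (⟨n - 1 - j, by omega⟩ : Fin n)]
    · simp only [Fin.val_mk]
      rw [show n - 1 - (n - 1 - j) = j by omega]
    · intro b _ hb
      have hbv : (b : ℕ) ≠ n - 1 - j := fun h => hb (Fin.ext h)
      have hblt := b.isLt
      rw [hzero (n - 1 - (b : ℕ)) (by omega) (by omega), mul_zero]
    · intro h
      exact absurd (Finset.mem_univ _) h
  -- the main expansion of `D (n+1)`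
  have hstep : col (n + 1) = fun p => ∑ i : Fin n,
      (derivWithin (fun t => a t i) I x * col (n - 1 - (i : ℕ)) p
        + a x i * col (n - (i : ℕ)) p) := by
    funext p
    exact deriv_step hIo ha (hf.1 p) hx
  have hmain : D (n + 1) = ∑ i : Fin n,
      (derivWithin (fun t => a t i) I x * D (n - 1 - (i : ℕ))
        + a x i * D (n - (i : ℕ))) := by
    show (base.updateCol q0 (col (n + 1))).det = _
    rw [hstep]
    exact hL2 _ _ _ _
  rw [Finset.sum_add_distrib] at hmain
  -- first sum: only `i = n-1-j` survives
  have e1 : ∑ i : Fin n, derivWithin (fun t => a t i) I x * D (n - 1 - (i : ℕ)) =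
      derivWithin (fun t => a t ⟨n - 1 - j, by omega⟩) I x * D j := by
    rw [Finset.sum_eq_single (⟨n - 1 - j, by omega⟩ : Fin n)]
    · simp only [Fin.val_mk]
      rw [show n - 1 - (n - 1 - j) = j by omega]
    · intro b _ hb
      have hbv : (b : ℕ) ≠ n - 1 - j := fun h => hb (Fin.ext h)
      have hblt := b.isLt
      rw [hzero (n - 1 - (b : ℕ)) (by omega) (by omega), mul_zero]
    · intro h
      exact absurd (Finset.mem_univ _) h
  -- second sum: `i = 0` and (when `j ≥ 1`) `i = n - j` survive
  have e2 : ∑ i : Fin n, a x i * D (n - (i : ℕ)) =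
      a x q0 * D n + aExt a (n - j + 1) x * D j := by
    rw [← Finset.add_sum_erase _ _ (Finset.mem_univ q0), hq0v, Nat.sub_zero]
    congr 1
    by_cases hj0 : j = 0
    · subst hj0
      have hs0 : ∑ b ∈ Finset.univ.erase q0, a x b * D (n - (b : ℕ)) = 0 := by
        refine Finset.sum_eq_zero fun b hb => ?_
        have hb0 : (b : ℕ) ≠ 0 := fun h => (Finset.mem_erase.mp hb).1 (Fin.ext h)
        have hblt := b.isLt
        rw [hzero (n - (b : ℕ)) (by omega) (by omega), mul_zero]
      have haE0 : aExt a (n - 0 + 1) x = 0 := by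
        simp only [aExt]
        rw [dif_neg (by omega)]
      rw [hs0, haE0, zero_mul]
    · have hmem : (⟨n - j, by omega⟩ : Fin n) ∈ Finset.univ.erase q0 :=
        Finset.mem_erase.mpr ⟨Fin.ne_of_val_ne (by simp only [Fin.val_mk, hq0v]; omega),
          Finset.mem_univ _⟩
      rw [Finset.sum_eq_single_of_mem _ hmem]
      · have haE : aExt a (n - j + 1) x = a x ⟨n - j, by omega⟩ := by
          simp only [aExt]
          rw [dif_pos (show n - j + 1 - 1 < n by omega)]
          exact congrArg (a x) (Fin.ext (by simp only [Fin.val_mk]; omega))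
        rw [haE]
        simp only [Fin.val_mk]
        rw [show n - (n - j) = j by omega]
      · intro b hb hbne
        have hb0 : (b : ℕ) ≠ 0 := fun h => (Finset.mem_erase.mp hb).1 (Fin.ext h)
        have hbv : (b : ℕ) ≠ n - j := fun h => hbne (Fin.ext h)
        have hblt := b.isLt
        rw [hzero (n - (b : ℕ)) (by omega) (by omega), mul_zero]
  rw [e1, e2, hDn, hDj] at hmain
  rw [hgen, hmain]
  -- simplify the `aExt` values on the right-hand side
  have ha1 : aExt a 1 x = a x q0 := by
    simp only [aExt]
    rw [dif_pos (show 1 - 1 < n by omega)]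
  have hanj : aExt a (n - j) = fun t => a t ⟨n - 1 - j, by omega⟩ := by
    funext t
    simp only [aExt]
    rw [dif_pos (show n - j - 1 < n by omega)]
    exact congrArg (a t) (Fin.ext (by simp only [Fin.val_mk]; omega))
  rw [ha1, hanj, show n - j - 1 = n - 1 - j by omega]
  have hanjx : (fun t => a t (⟨n - 1 - j, by omega⟩ : Fin n)) x =
      a x (⟨n - 1 - j, by omega⟩ : Fin n) := rfl
  ring
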